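/- Let 0<q<1, b<0<a, c,d ∈ ℂ with d = conj(c), c ∉ ℝ. Let I~ = {b⁻¹qⁿ : n≥1} ∪ {0} ∪ {a⁻¹qⁿ : n≥1} ⊂ ℝ, and let D be the univariate big q-Jacobi q-difference operator. If f ∈ ℝ[x] attains its minimum over I~ at a point x̃ ∈ I~, then D f(x̃) ≥ 0 (positive maximum principle). -/

import Mathlib

private lemma bigQJacobi_aux_identity (q a b cr ci x f0 : ℝ) (r : Polynomial ℝ)
    (hx : x ≠ 0) (hq : q ≠ 0) (ha : a ≠ 0) (hb : b ≠ 0) :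
    (-(q/(a*b)) * ((cr - x⁻¹)^2 + ci^2))
        * ((f0 + (q*x)^2 * r.eval (q*x)) - (f0 + x^2 * r.eval x))
    + (-(q^2/(a*b)) * (a/q - x⁻¹) * (b/q - x⁻¹))
        * ((f0 + (x/q)^2 * r.eval (x/q)) - (f0 + x^2 * r.eval x))
    = (-(q/(a*b)) * ((cr*x - 1)^2 + (ci*x)^2)) * (q^2 * r.eval (q*x) - r.eval x)
      + (-(q^2/(a*b)) * (a*x/q - 1) * (b*x/q - 1)) * (r.eval (x/q)/q^2 - r.eval x) := by
  have h1 : x⁻¹ = 1 / x := inv_eq_one_div x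
  rw [h1]
  field_simp
  ring

private lemma bigQJacobi_aux_F0 (q a b r0 : ℝ) (hq : q ≠ 0) (ha : a ≠ 0) (hb : b ≠ 0) :
    (-(q/(a*b)) * ((0 - 1)^2 + 0^2)) * (q^2 * r0 - r0)
      + (-(q^2/(a*b)) * (a*0/q - 1) * (b*0/q - 1)) * (r0/q^2 - r0)
    = ((1-q)*(1-q^2)*r0) * (-(a*b))⁻¹ := by
  have hab : a*b ≠ 0 := mul_ne_zero ha hb
  field_simp
  ring


/-- Positive maximum principle for the univariate big q-Jacobi operator `D` on the
compactified q-lattice `Ĩ = {b⁻¹qⁿ : n ≥ 1} ∪ {0} ∪ {a⁻¹qⁿ : n ≥ 1}`: if a real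
polynomial `f` attains its minimum over `Ĩ` at `x̃ ∈ Ĩ`, then `(Df)(x̃) ≥ 0`. -/
theorem bigQJacobi_positive_maximum_principle
    (q a b : ℝ) (c d : ℂ)
    (hq : 0 < q) (hq1 : q < 1) (hb : b < 0) (ha : 0 < a)
    (hd : d = starRingEnd ℂ c) (hc : c.im ≠ 0)
    (f Df : Polynomial ℝ)
    (hDf : ∀ x : ℝ, x ≠ 0 →
      (((Df.eval x : ℝ)) : ℂ)
        = (-((q : ℂ)/((a : ℂ)*(b : ℂ))) * (c - (x : ℂ)⁻¹) * (d - (x : ℂ)⁻¹))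
            * ((f.eval (q * x) : ℝ) - (f.eval x : ℝ))
          + (-((q : ℂ)^2/((a : ℂ)*(b : ℂ))) * ((a : ℂ)/(q : ℂ) - (x : ℂ)⁻¹)
              * ((b : ℂ)/(q : ℂ) - (x : ℂ)⁻¹))
            * ((f.eval (x / q) : ℝ) - (f.eval x : ℝ)))
    (Itil : Set ℝ)
    (hItil : Itil = {0} ∪ {x | ∃ n : ℕ, 1 ≤ n ∧ x = b⁻¹ * q ^ n}
                        ∪ {x | ∃ n : ℕ, 1 ≤ n ∧ x = a⁻¹ * q ^ n})
    (xt : ℝ) (hxt : xt ∈ Itil) (hmin : ∀ y ∈ Itil, f.eval xt ≤ f.eval y) :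
    0 ≤ Df.eval xt := by
  have hab : a * b < 0 := mul_neg_of_pos_of_neg ha hb
  have hqne : q ≠ 0 := hq.ne'
  -- membership helpers
  have hmemA : ∀ n : ℕ, 1 ≤ n → a⁻¹ * q ^ n ∈ Itil := by
    intro n hn; rw [hItil]; exact Or.inr ⟨n, hn, rfl⟩
  have hmemB : ∀ n : ℕ, 1 ≤ n → b⁻¹ * q ^ n ∈ Itil := by
    intro n hn; rw [hItil]; exact Or.inl (Or.inr ⟨n, hn, rfl⟩)
  -- real form of the operator
  have key : ∀ x : ℝ, x ≠ 0 → Df.eval x =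
      (-(q/(a*b)) * ((c.re - x⁻¹)^2 + c.im^2)) * (f.eval (q*x) - f.eval x)
      + (-(q^2/(a*b)) * (a/q - x⁻¹) * (b/q - x⁻¹)) * (f.eval (x/q) - f.eval x) := by
    intro x hx
    apply Complex.ofReal_injective
    rw [hDf x hx, hd]
    have hc' : (c : ℂ) = c.re + c.im * Complex.I := (Complex.re_add_im c).symm
    push_cast
    conv_lhs => rw [hc']
    simp only [map_add, map_mul, Complex.conj_I, Complex.conj_ofReal]
    ring_nf
    simp only [Complex.I_sq]
    ring
  have hsp : ∀ u : ℝ, 0 ≤ -(q/(a*b)) * ((c.re - u)^2 + c.im^2) := by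
    intro u
    have h1 : q/(a*b) < 0 := div_neg_of_pos_of_neg hq hab
    have h2 : 0 ≤ (c.re - u)^2 + c.im^2 := by positivity
    exact mul_nonneg (by linarith) h2
  have hsm0 : (0:ℝ) < -(q^2/(a*b)) := by
    have h1 : q^2/(a*b) < 0 := div_neg_of_pos_of_neg (by positivity) hab
    linarith
  rw [hItil] at hxt
  rcases hxt with (h0 | hB) | hA
  · -- zero case
    have hxt0 : xt = 0 := h0
    subst hxt0
    -- the lattice sequence from the positive side
    set xa : ℕ → ℝ := fun n => a⁻¹ * q ^ (n+1) with hxa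
    set xb : ℕ → ℝ := fun n => b⁻¹ * q ^ (n+1) with hxb
    have hxapos : ∀ n, 0 < xa n := fun n => by positivity
    have hxbneg : ∀ n, xb n < 0 := fun n => by
      have : (0:ℝ) < q ^ (n+1) := by positivity
      have hbinv : b⁻¹ < 0 := inv_lt_zero.mpr hb
      exact mul_neg_of_neg_of_pos hbinv this
    have htq : Filter.Tendsto (fun n : ℕ => q ^ (n+1)) Filter.atTop (nhds 0) := by
      have := tendsto_pow_atTop_nhds_zero_of_lt_one hq.le hq1
      exact this.comp (Filter.tendsto_add_atTop_nat 1)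
    have hta : Filter.Tendsto xa Filter.atTop (nhds 0) := by
      have := htq.const_mul (a⁻¹)
      simpa using this
    have htb : Filter.Tendsto xb Filter.atTop (nhds 0) := by
      have := htq.const_mul (b⁻¹)
      simpa using this
    have hminA : ∀ n, f.eval 0 ≤ f.eval (xa n) := fun n => hmin _ (hmemA (n+1) (by omega))
    have hminB : ∀ n, f.eval 0 ≤ f.eval (xb n) := fun n => hmin _ (hmemB (n+1) (by omega))
    -- f'(0) = 0
    have hslope : Filter.Tendsto (slope f.eval 0) (nhdsWithin 0 {(0:ℝ)}ᶜ)
        (nhds (f.derivative.eval 0)) := by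
      have := Polynomial.hasDerivAt f 0
      have h' : HasDerivAt f.eval (f.derivative.eval 0) 0 := by
        exact this
      exact hasDerivAt_iff_tendsto_slope.mp h'
    have htaW : Filter.Tendsto xa Filter.atTop (nhdsWithin 0 {(0:ℝ)}ᶜ) :=
      tendsto_nhdsWithin_iff.mpr ⟨hta, Filter.Eventually.of_forall fun n => (hxapos n).ne'⟩
    have htbW : Filter.Tendsto xb Filter.atTop (nhdsWithin 0 {(0:ℝ)}ᶜ) :=
      tendsto_nhdsWithin_iff.mpr ⟨htb, Filter.Eventually.of_forall fun n => (hxbneg n).ne⟩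
    have hderiv0 : f.derivative.eval 0 = 0 := by
      have h1 : 0 ≤ f.derivative.eval 0 := by
        refine ge_of_tendsto' (hslope.comp htaW) (fun n => ?_)
        have : slope f.eval 0 (xa n) = (f.eval (xa n) - f.eval 0) / (xa n) := by
          rw [slope_def_field]; ring_nf
        simp only [Function.comp_apply, this]
        exact div_nonneg (by linarith [hminA n]) (hxapos n).le
      have h2 : f.derivative.eval 0 ≤ 0 := by
        refine le_of_tendsto' (hslope.comp htbW) (fun n => ?_)
        have : slope f.eval 0 (xb n) = (f.eval (xb n) - f.eval 0) / (xb n) := by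
          rw [slope_def_field]; ring_nf
        simp only [Function.comp_apply, this]
        exact div_nonpos_of_nonneg_of_nonpos (by linarith [hminB n]) (hxbneg n).le
      linarith
    -- write f = f(0) + X^2 * r
    set p : Polynomial ℝ := f - Polynomial.C (f.eval 0) with hp
    have hp0 : p.coeff 0 = 0 := by
      simp [hp, Polynomial.coeff_sub, Polynomial.coeff_zero_eq_eval_zero]
    have hp1 : p.coeff 1 = 0 := by
      have hf1 : f.coeff 1 = 0 := by
        rw [← hderiv0, ← Polynomial.coeff_zero_eq_eval_zero]
        simp [Polynomial.coeff_derivative]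
      simp [hp, Polynomial.coeff_sub, Polynomial.coeff_C, hf1]
    obtain ⟨r, hfr⟩ : ∃ r : Polynomial ℝ, ∀ x : ℝ, f.eval x = f.eval 0 + x^2 * r.eval x := by
      refine ⟨p.divX.divX, ?_⟩
      have hpr : p = Polynomial.X^2 * p.divX.divX := by
        have e1 : p.divX * Polynomial.X + Polynomial.C (p.coeff 0) = p :=
          Polynomial.divX_mul_X_add p
        have e2 : p.divX.divX * Polynomial.X + Polynomial.C (p.divX.coeff 0) = p.divX :=
          Polynomial.divX_mul_X_add p.divX
        have hd0 : p.divX.coeff 0 = 0 := by rw [Polynomial.coeff_divX]; exact hp1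
        rw [hd0, map_zero, add_zero] at e2
        rw [hp0, map_zero, add_zero] at e1
        conv_lhs => rw [← e1, ← e2]
        ring
      intro x
      have h1 : p.eval x = x^2 * (p.divX.divX).eval x := by
        conv_lhs => rw [hpr]
        simp [Polynomial.eval_mul]
      have hpx : p.eval x = f.eval x - f.eval 0 := by simp [hp]
      linarith [h1, hpx]
    clear hp0 hp1 hp
    clear_value p
    clear p
    -- regularized operator
    set F : ℝ → ℝ := fun x =>
      (-(q/(a*b)) * ((c.re*x - 1)^2 + (c.im*x)^2)) * (q^2 * r.eval (q*x) - r.eval x)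
      + (-(q^2/(a*b)) * (a*x/q - 1) * (b*x/q - 1)) * (r.eval (x/q)/q^2 - r.eval x)
      with hF
    have hDfF : ∀ x : ℝ, x ≠ 0 → Df.eval x = F x := by
      intro x hx
      rw [key x hx, hfr (q*x), hfr x, hfr (x/q), hF]
      exact bigQJacobi_aux_identity q a b c.re c.im x (f.eval 0) r hx hqne ha.ne' hb.ne
    have hFcont : Continuous F := by
      rw [hF]
      have hrc : Continuous fun x : ℝ => r.eval x := r.continuous_aeval
      fun_prop
    have hDf0 : Df.eval 0 = F 0 := by
      have t1 : Filter.Tendsto (fun n => Df.eval (xa n)) Filter.atTop (nhds (Df.eval 0)) :=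
        (Df.continuous_aeval.tendsto 0).comp hta
      have t2 : Filter.Tendsto (fun n => F (xa n)) Filter.atTop (nhds (F 0)) :=
        (hFcont.tendsto 0).comp hta
      have heq : (fun n => Df.eval (xa n)) = fun n => F (xa n) := by
        funext n; exact hDfF _ (hxapos n).ne'
      rw [heq] at t1
      exact tendsto_nhds_unique t1 t2
    -- r(0) ≥ 0
    have hr0 : 0 ≤ r.eval 0 := by
      have tr : Filter.Tendsto (fun n => r.eval (xa n)) Filter.atTop (nhds (r.eval 0)) :=
        (r.continuous_aeval.tendsto 0).comp hta
      refine ge_of_tendsto' tr (fun n => ?_)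
      have h1 : 0 ≤ (xa n)^2 * r.eval (xa n) := by
        have := hfr (xa n); have := hminA n; linarith [hfr (xa n), hminA n]
      have h2 : 0 < (xa n)^2 := by positivity
      exact nonneg_of_mul_nonneg_right h1 h2
    have hval : F 0 = ((1-q)*(1-q^2)*r.eval 0) * (-(a*b))⁻¹ := by
      rw [hF]
      have h0 := bigQJacobi_aux_F0 q a b (r.eval 0) hqne ha.ne' hb.ne
      simpa using h0
    rw [hDf0, hval]
    have hab' : (0:ℝ) < -(a*b) := by linarith
    have h1 : (0:ℝ) ≤ 1 - q := by linarith
    have h2 : (0:ℝ) ≤ 1 - q^2 := by nlinarith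
    exact mul_nonneg (mul_nonneg (mul_nonneg h1 h2) hr0) (inv_nonneg.mpr hab'.le)
  · -- xt = b⁻¹ q^n
    obtain ⟨n, hn, hx⟩ := hB
    have hqn : (0:ℝ) < q ^ n := by positivity
    have hbinv : b⁻¹ < 0 := inv_lt_zero.mpr hb
    have hxneg : xt < 0 := by rw [hx]; exact mul_neg_of_neg_of_pos hbinv hqn
    have hxne : xt ≠ 0 := hxneg.ne
    have hxinv : xt⁻¹ = b / q ^ n := by rw [hx]; field_simp
    rw [key xt hxne]
    have hterm1 : 0 ≤ (-(q/(a*b)) * ((c.re - xt⁻¹)^2 + c.im^2)) * (f.eval (q*xt) - f.eval xt) := by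
      apply mul_nonneg (hsp _)
      have hmem : q * xt ∈ Itil := by
        have : q * xt = b⁻¹ * q ^ (n+1) := by rw [hx]; ring
        rw [this]; exact hmemB (n+1) (by omega)
      linarith [hmin _ hmem]
    have hterm2 : 0 ≤ (-(q^2/(a*b)) * (a/q - xt⁻¹) * (b/q - xt⁻¹)) * (f.eval (xt/q) - f.eval xt) := by
      rcases eq_or_lt_of_le hn with h1 | h2
      · -- n = 1 : second factor vanishes
        have hn1 : n = 1 := h1.symm
        have : b/q - xt⁻¹ = 0 := by rw [hxinv, hn1]; simp [pow_one]
        rw [this]; ring_nf; simp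
      · -- n ≥ 2
        have hn2 : 2 ≤ n := h2
        obtain ⟨m, hm⟩ : ∃ m, n = m + 1 := ⟨n - 1, by omega⟩
        have hm1 : 1 ≤ m := by omega
        have hmem : xt / q ∈ Itil := by
          have : xt / q = b⁻¹ * q ^ m := by
            rw [hx, hm, pow_succ, mul_div_assoc, mul_div_cancel_right₀ _ hqne]
          rw [this]; exact hmemB m hm1
        have hfs : 0 ≤ f.eval (xt/q) - f.eval xt := by linarith [hmin _ hmem]
        apply mul_nonneg _ hfs
        have hqpow : q ^ n ≤ q := by
          simpa using pow_le_pow_of_le_one hq.le hq1.le hn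
        have hA : 0 < a/q - xt⁻¹ := by
          rw [hxinv]
          have : b / q ^ n < 0 := div_neg_of_neg_of_pos hb hqn
          have : 0 < a / q := by positivity
          linarith
        have hB' : 0 ≤ b/q - xt⁻¹ := by
          rw [hxinv]
          rw [sub_nonneg, div_le_div_iff₀ hqn hq]
          nlinarith
        exact mul_nonneg (mul_nonneg hsm0.le hA.le) hB'
    linarith
  · -- xt = a⁻¹ q^n
    obtain ⟨n, hn, hx⟩ := hA
    have hqn : (0:ℝ) < q ^ n := by positivity
    have hxpos : 0 < xt := by rw [hx]; positivity
    have hxne : xt ≠ 0 := hxpos.ne'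
    have hxinv : xt⁻¹ = a / q ^ n := by rw [hx]; field_simp
    rw [key xt hxne]
    have hterm1 : 0 ≤ (-(q/(a*b)) * ((c.re - xt⁻¹)^2 + c.im^2)) * (f.eval (q*xt) - f.eval xt) := by
      apply mul_nonneg (hsp _)
      have hmem : q * xt ∈ Itil := by
        have : q * xt = a⁻¹ * q ^ (n+1) := by rw [hx]; ring
        rw [this]; exact hmemA (n+1) (by omega)
      linarith [hmin _ hmem]
    have hterm2 : 0 ≤ (-(q^2/(a*b)) * (a/q - xt⁻¹) * (b/q - xt⁻¹)) * (f.eval (xt/q) - f.eval xt) := by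
      rcases eq_or_lt_of_le hn with h1 | h2
      · have hn1 : n = 1 := h1.symm
        have : a/q - xt⁻¹ = 0 := by rw [hxinv, hn1]; simp [pow_one]
        rw [this]; ring_nf; simp
      · have hn2 : 2 ≤ n := h2
        obtain ⟨m, hm⟩ : ∃ m, n = m + 1 := ⟨n - 1, by omega⟩
        have hm1 : 1 ≤ m := by omega
        have hmem : xt / q ∈ Itil := by
          have : xt / q = a⁻¹ * q ^ m := by
            rw [hx, hm, pow_succ, mul_div_assoc, mul_div_cancel_right₀ _ hqne]
          rw [this]; exact hmemA m hm1
        have hfs : 0 ≤ f.eval (xt/q) - f.eval xt := by linarith [hmin _ hmem]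
        apply mul_nonneg _ hfs
        have hqpow : q ^ n ≤ q := by
          simpa using pow_le_pow_of_le_one hq.le hq1.le hn
        have hA' : a/q - xt⁻¹ ≤ 0 := by
          rw [hxinv, sub_nonpos, div_le_div_iff₀ hq hqn]
          nlinarith
        have hB' : b/q - xt⁻¹ < 0 := by
          rw [hxinv]
          have h1 : b / q < 0 := div_neg_of_neg_of_pos hb hq
          have h2 : 0 < a / q ^ n := by positivity
          linarith
        have hprod : 0 ≤ (a/q - xt⁻¹) * (b/q - xt⁻¹) := by
          have := mul_nonneg (neg_nonneg.mpr hA') (neg_nonneg.mpr hB'.le)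
          rw [neg_mul_neg] at this
          exact this
        rw [mul_assoc]
        exact mul_nonneg hsm0.le hprod
    linarith
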